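/- Let n ≥ 1, let g : ℝⁿ → ℝ be twice continuously differentiable, let φ₁,…,φₙ : ℝ² → ℝ be twice continuously differentiable and ℤ²-periodic, let σ : ℝ² → ℝ² be continuously differentiable, ℤ²-periodic and divergence free (∂₁σ¹ + ∂₂σ² ≡ 0), and let ω : ℝ² → ℝ be continuously differentiable and ℤ²-periodic. Write P(u) = (⟨u,φ₁⟩, …, ⟨u,φₙ⟩) and define, for ℤ²-periodic continuous u, H(u) = −∑_{j=1}^n ∂_j g(P(u)) · ⟨u, σ·∇φ_j⟩. Then the function ε ↦ H(ω + ε·(σ·∇ω)) is differentiable at ε = 0 and its derivative equals ∑_{j=1}^n ∂_j g(P(ω)) · ⟨ω, σ·∇(σ·∇φ_j)⟩ + ∑_{j,l=1}^n ∂²_{jl} g(P(ω)) · ⟨ω, σ·∇φ_j⟩ · ⟨ω, σ·∇φ_l⟩. -/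

import Mathlib

open MeasureTheory BigOperators

/-- Pairing of two (`ℤ²`-periodic) functions on the torus:
`⟨u, v⟩ = ∫_{[0,1]²} u(x) v(x) dx`. -/
noncomputable def pairT2 (u v : (ℝ × ℝ) → ℝ) : ℝ :=
  ∫ x in (Set.Icc (0 : ℝ) 1) ×ˢ (Set.Icc (0 : ℝ) 1), u x * v x

namespace SecondOrderAux

abbrev box : Set (ℝ × ℝ) := (Set.Icc (0 : ℝ) 1) ×ˢ (Set.Icc (0 : ℝ) 1)

lemma integral_partial_fst {F : ℝ × ℝ → ℝ} (hF : ContDiff ℝ 1 F)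
    (hper : ∀ z : ℝ × ℝ, F (z + (1, 0)) = F z) (y : ℝ) :
    ∫ x in Set.Icc (0:ℝ) 1, fderiv ℝ F (x, y) (1, 0) = 0 := by
  have hd : ∀ x : ℝ, HasDerivAt (fun x => F (x, y)) (fderiv ℝ F (x, y) (1, 0)) x := by
    intro x
    have h1 : HasFDerivAt F (fderiv ℝ F (x, y)) (x, y) :=
      (hF.differentiable one_ne_zero (x, y)).hasFDerivAt
    have h2 : HasDerivAt (fun x : ℝ => ((x, y) : ℝ × ℝ)) ((1 : ℝ), (0 : ℝ)) x :=
      HasDerivAt.prodMk (hasDerivAt_id x) (hasDerivAt_const x y)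
    exact h1.comp_hasDerivAt x h2
  have hcont : Continuous fun x : ℝ => fderiv ℝ F (x, y) (1, 0) :=
    ((hF.continuous_fderiv one_ne_zero).comp (by fun_prop)).clm_apply continuous_const
  rw [MeasureTheory.integral_Icc_eq_integral_Ioc,
    ← intervalIntegral.integral_of_le (zero_le_one)]
  rw [intervalIntegral.integral_eq_sub_of_hasDerivAt (fun t _ => hd t)
    (hcont.intervalIntegrable 0 1)]
  have := hper (0, y)
  simp only [Prod.mk_add_mk, add_zero, zero_add] at this
  rw [this]; ring

lemma integral_partial_snd {F : ℝ × ℝ → ℝ} (hF : ContDiff ℝ 1 F)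
    (hper : ∀ z : ℝ × ℝ, F (z + (0, 1)) = F z) (x : ℝ) :
    ∫ y in Set.Icc (0:ℝ) 1, fderiv ℝ F (x, y) (0, 1) = 0 := by
  have hd : ∀ y : ℝ, HasDerivAt (fun y => F (x, y)) (fderiv ℝ F (x, y) (0, 1)) y := by
    intro y
    have h1 : HasFDerivAt F (fderiv ℝ F (x, y)) (x, y) :=
      (hF.differentiable one_ne_zero (x, y)).hasFDerivAt
    have h2 : HasDerivAt (fun y : ℝ => ((x, y) : ℝ × ℝ)) ((0 : ℝ), (1 : ℝ)) y :=
      HasDerivAt.prodMk (hasDerivAt_const y x) (hasDerivAt_id y)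
    exact h1.comp_hasDerivAt y h2
  have hcont : Continuous fun y : ℝ => fderiv ℝ F (x, y) (0, 1) :=
    ((hF.continuous_fderiv one_ne_zero).comp (by fun_prop)).clm_apply continuous_const
  rw [MeasureTheory.integral_Icc_eq_integral_Ioc,
    ← intervalIntegral.integral_of_le (zero_le_one)]
  rw [intervalIntegral.integral_eq_sub_of_hasDerivAt (fun t _ => hd t)
    (hcont.intervalIntegrable 0 1)]
  have := hper (x, 0)
  simp only [Prod.mk_add_mk, add_zero, zero_add] at this
  rw [this]; ring

lemma integrableOn_box {f : ℝ × ℝ → ℝ} (hf : Continuous f) :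
    IntegrableOn f box := hf.continuousOn.integrableOn_compact (isCompact_Icc.prod isCompact_Icc)

lemma setIntegral_box {f : ℝ × ℝ → ℝ} (hf : Continuous f) :
    ∫ z in box, f z = ∫ x in Set.Icc (0:ℝ) 1, ∫ y in Set.Icc (0:ℝ) 1, f (x, y) := by
  rw [MeasureTheory.Measure.volume_eq_prod]
  exact MeasureTheory.setIntegral_prod f (by rw [← MeasureTheory.Measure.volume_eq_prod]; exact integrableOn_box hf)

lemma setIntegral_box_swap {f : ℝ × ℝ → ℝ} (hf : Continuous f) :
    ∫ z in box, f z = ∫ y in Set.Icc (0:ℝ) 1, ∫ x in Set.Icc (0:ℝ) 1, f (x, y) := by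
  rw [setIntegral_box hf]
  apply MeasureTheory.integral_integral_swap
  rw [Measure.prod_restrict, ← MeasureTheory.Measure.volume_eq_prod]
  exact integrableOn_box hf

lemma integral_divergence {F₁ F₂ : ℝ × ℝ → ℝ} (h1 : ContDiff ℝ 1 F₁) (h2 : ContDiff ℝ 1 F₂)
    (hp1 : ∀ z : ℝ × ℝ, F₁ (z + (1, 0)) = F₁ z) (hp2 : ∀ z : ℝ × ℝ, F₂ (z + (0, 1)) = F₂ z) :
    ∫ z in box, (fderiv ℝ F₁ z (1, 0) + fderiv ℝ F₂ z (0, 1)) = 0 := by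
  have hc1 : Continuous fun z => fderiv ℝ F₁ z (1, 0) :=
    (h1.continuous_fderiv one_ne_zero).clm_apply continuous_const
  have hc2 : Continuous fun z => fderiv ℝ F₂ z (0, 1) :=
    (h2.continuous_fderiv one_ne_zero).clm_apply continuous_const
  rw [MeasureTheory.integral_add (integrableOn_box hc1) (integrableOn_box hc2)]
  rw [setIntegral_box_swap hc1, setIntegral_box hc2]
  simp only [integral_partial_fst h1 hp1, integral_partial_snd h2 hp2]
  simp

lemma key_ibp {u v : ℝ × ℝ → ℝ} {σ : ℝ × ℝ → ℝ × ℝ}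
    (hu : ContDiff ℝ 1 u) (hv : ContDiff ℝ 1 v) (hσ : ContDiff ℝ 1 σ)
    (hσdiv : ∀ x : ℝ × ℝ, (fderiv ℝ σ x (1, 0)).1 + (fderiv ℝ σ x (0, 1)).2 = 0)
    (hup : ∀ (z : ℝ × ℝ) (m : ℤ × ℤ), u (z + ((m.1 : ℝ), (m.2 : ℝ))) = u z)
    (hvp : ∀ (z : ℝ × ℝ) (m : ℤ × ℤ), v (z + ((m.1 : ℝ), (m.2 : ℝ))) = v z)
    (hσp : ∀ (z : ℝ × ℝ) (m : ℤ × ℤ), σ (z + ((m.1 : ℝ), (m.2 : ℝ))) = σ z) :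
    ∫ z in box, (fderiv ℝ u z (σ z) * v z + u z * fderiv ℝ v z (σ z)) = 0 := by
  set F₁ : ℝ × ℝ → ℝ := fun z => u z * v z * (σ z).1 with hF₁
  set F₂ : ℝ × ℝ → ℝ := fun z => u z * v z * (σ z).2 with hF₂
  have hcF₁ : ContDiff ℝ 1 F₁ := (hu.mul hv).mul (contDiff_fst.comp hσ)
  have hcF₂ : ContDiff ℝ 1 F₂ := (hu.mul hv).mul (contDiff_snd.comp hσ)
  have hp1 : ∀ z : ℝ × ℝ, F₁ (z + (1, 0)) = F₁ z := by
    intro z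
    have h10 : ((1 : ℝ), (0 : ℝ)) = (((1 : ℤ) : ℝ), ((0 : ℤ) : ℝ)) := by norm_num
    simp only [hF₁, h10, hup z (1, 0), hvp z (1, 0), hσp z (1, 0)]
  have hp2 : ∀ z : ℝ × ℝ, F₂ (z + (0, 1)) = F₂ z := by
    intro z
    have h01 : ((0 : ℝ), (1 : ℝ)) = (((0 : ℤ) : ℝ), ((1 : ℤ) : ℝ)) := by norm_num
    simp only [hF₂, h01, hup z (0, 1), hvp z (0, 1), hσp z (0, 1)]
  have key := integral_divergence hcF₁ hcF₂ hp1 hp2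
  rw [← key]
  apply MeasureTheory.setIntegral_congr_fun (by measurability)
  intro z _
  have hu' : HasFDerivAt u (fderiv ℝ u z) z := (hu.differentiable one_ne_zero z).hasFDerivAt
  have hv' : HasFDerivAt v (fderiv ℝ v z) z := (hv.differentiable one_ne_zero z).hasFDerivAt
  have hσ' : HasFDerivAt σ (fderiv ℝ σ z) z := (hσ.differentiable one_ne_zero z).hasFDerivAt
  have huv : HasFDerivAt (fun z => u z * v z)
      (u z • fderiv ℝ v z + v z • fderiv ℝ u z) z := hu'.mul hv'
  have hσ1 : HasFDerivAt (fun z => (σ z).1)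
      ((ContinuousLinearMap.fst ℝ ℝ ℝ).comp (fderiv ℝ σ z)) z :=
    (ContinuousLinearMap.fst ℝ ℝ ℝ).hasFDerivAt.comp z hσ'
  have hσ2 : HasFDerivAt (fun z => (σ z).2)
      ((ContinuousLinearMap.snd ℝ ℝ ℝ).comp (fderiv ℝ σ z)) z :=
    (ContinuousLinearMap.snd ℝ ℝ ℝ).hasFDerivAt.comp z hσ'
  have hDF₁ := (huv.mul hσ1).fderiv
  have hDF₂ := (huv.mul hσ2).fderiv
  have e1 : fderiv ℝ F₁ z (1, 0) =
      u z * v z * (fderiv ℝ σ z (1, 0)).1 +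
        (σ z).1 * (u z * fderiv ℝ v z (1, 0) + v z * fderiv ℝ u z (1, 0)) := by
    rw [show F₁ = ((fun z => u z * v z) * fun z => (σ z).1) from rfl, hDF₁]; simp [smul_eq_mul]; ring
  have e2 : fderiv ℝ F₂ z (0, 1) =
      u z * v z * (fderiv ℝ σ z (0, 1)).2 +
        (σ z).2 * (u z * fderiv ℝ v z (0, 1) + v z * fderiv ℝ u z (0, 1)) := by
    rw [show F₂ = ((fun z => u z * v z) * fun z => (σ z).2) from rfl, hDF₂]; simp [smul_eq_mul]; ring
  have hsplit : (σ z : ℝ × ℝ) = (σ z).1 • ((1:ℝ), (0:ℝ)) + (σ z).2 • ((0:ℝ), (1:ℝ)) := by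
    ext <;> simp
  have eu : fderiv ℝ u z (σ z) =
      (σ z).1 * fderiv ℝ u z (1, 0) + (σ z).2 * fderiv ℝ u z (0, 1) := by
    have h := congrArg (fderiv ℝ u z) hsplit
    rw [map_add, (fderiv ℝ u z).map_smul, (fderiv ℝ u z).map_smul, smul_eq_mul, smul_eq_mul] at h
    exact h
  have ev : fderiv ℝ v z (σ z) =
      (σ z).1 * fderiv ℝ v z (1, 0) + (σ z).2 * fderiv ℝ v z (0, 1) := by
    have h := congrArg (fderiv ℝ v z) hsplit
    rw [map_add, (fderiv ℝ v z).map_smul, (fderiv ℝ v z).map_smul, smul_eq_mul, smul_eq_mul] at h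
    exact h
  have hdiv := hσdiv z
  show fderiv ℝ u z (σ z) * v z + u z * fderiv ℝ v z (σ z)
      = fderiv ℝ F₁ z (1, 0) + fderiv ℝ F₂ z (0, 1)
  rw [eu, ev, e1, e2]
  linear_combination (-(u z * v z)) * hdiv

lemma fderiv_shift {E F : Type*} [NormedAddCommGroup E] [NormedSpace ℝ E]
    [NormedAddCommGroup F] [NormedSpace ℝ F]
    {f : E → F} (hf : Differentiable ℝ f) (c : E) (h : ∀ x, f (x + c) = f x) (x : E) :
    fderiv ℝ f (x + c) = fderiv ℝ f x := by
  have h2 : HasFDerivAt (fun y : E => y + c) (ContinuousLinearMap.id ℝ E) x :=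
    (hasFDerivAt_id x).add_const c
  have h1 : HasFDerivAt (fun y => f (y + c)) (fderiv ℝ f (x + c)) x := by
    simpa [Function.comp_def] using (hf (x + c)).hasFDerivAt.comp x h2
  have h3 : (fun y => f (y + c)) = f := funext h
  rw [h3] at h1
  exact h1.fderiv.symm

lemma pairT2_affine {a b v : ℝ × ℝ → ℝ} (ha : Continuous a) (hb : Continuous b)
    (hv : Continuous v) (ε : ℝ) :
    pairT2 (fun x => a x + ε * b x) v = pairT2 a v + ε * pairT2 b v := by
  unfold pairT2
  have h : ∀ x : ℝ × ℝ, (a x + ε * b x) * v x = a x * v x + ε * (b x * v x) := fun x => by ring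
  simp_rw [h]
  rw [MeasureTheory.integral_add (f := fun x => a x * v x) (g := fun x => ε * (b x * v x)) (integrableOn_box (ha.mul hv))
    ((integrableOn_box (hb.mul hv)).const_mul ε), MeasureTheory.integral_const_mul]

lemma pairT2_ibp {u v : ℝ × ℝ → ℝ} {σ : ℝ × ℝ → ℝ × ℝ}
    (hu : ContDiff ℝ 1 u) (hv : ContDiff ℝ 1 v) (hσ : ContDiff ℝ 1 σ)
    (hσdiv : ∀ x : ℝ × ℝ, (fderiv ℝ σ x (1, 0)).1 + (fderiv ℝ σ x (0, 1)).2 = 0)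
    (hup : ∀ (z : ℝ × ℝ) (m : ℤ × ℤ), u (z + ((m.1 : ℝ), (m.2 : ℝ))) = u z)
    (hvp : ∀ (z : ℝ × ℝ) (m : ℤ × ℤ), v (z + ((m.1 : ℝ), (m.2 : ℝ))) = v z)
    (hσp : ∀ (z : ℝ × ℝ) (m : ℤ × ℤ), σ (z + ((m.1 : ℝ), (m.2 : ℝ))) = σ z) :
    pairT2 (fun z => fderiv ℝ u z (σ z)) v = -pairT2 u (fun z => fderiv ℝ v z (σ z)) := by
  have h1 : Continuous fun z => fderiv ℝ u z (σ z) * v z :=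
    (((hu.continuous_fderiv one_ne_zero).clm_apply hσ.continuous).mul (hv.continuous))
  have h2 : Continuous fun z => u z * fderiv ℝ v z (σ z) :=
    (hu.continuous.mul ((hv.continuous_fderiv one_ne_zero).clm_apply hσ.continuous))
  have key := key_ibp hu hv hσ hσdiv hup hvp hσp
  rw [MeasureTheory.integral_add (integrableOn_box h1) (integrableOn_box h2)] at key
  unfold pairT2
  linarith [key]

lemma pi_eq_sum_single {n : ℕ} (Q : Fin n → ℝ) :
    Q = ∑ l, Q l • (Pi.single l (1 : ℝ) : Fin n → ℝ) := by
  funext i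
  simp [Finset.sum_apply, Pi.single_apply]

end SecondOrderAux

open SecondOrderAux in
/-- Second-order identity for cylindrical functionals (Lemma 4.1 of the paper): with
`P(u) = (⟨u,φ₁⟩,…,⟨u,φₙ⟩)` and `H(u) = -∑ⱼ ∂ⱼg(P(u)) ⟨u, σ·∇φⱼ⟩`, the map
`ε ↦ H(ω + ε (σ·∇ω))` is differentiable at `ε = 0` with derivative
`∑ⱼ ∂ⱼg(P(ω)) ⟨ω, σ·∇(σ·∇φⱼ)⟩ + ∑_{j,l} ∂²_{jl}g(P(ω)) ⟨ω, σ·∇φⱼ⟩ ⟨ω, σ·∇φ_l⟩`. -/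
theorem hasDerivAt_second_order_cylindrical
    (n : ℕ) (hn : 1 ≤ n)
    (g : (Fin n → ℝ) → ℝ) (hg : ContDiff ℝ 2 g)
    (φ : Fin n → (ℝ × ℝ) → ℝ) (hφ : ∀ j, ContDiff ℝ 2 (φ j))
    (hφper : ∀ (j : Fin n) (x : ℝ × ℝ) (m : ℤ × ℤ),
      φ j (x + ((m.1 : ℝ), (m.2 : ℝ))) = φ j x)
    (σ : (ℝ × ℝ) → ℝ × ℝ) (hσ : ContDiff ℝ 1 σ)
    (hσper : ∀ (x : ℝ × ℝ) (m : ℤ × ℤ), σ (x + ((m.1 : ℝ), (m.2 : ℝ))) = σ x)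
    (hσdiv : ∀ x : ℝ × ℝ, (fderiv ℝ σ x (1, 0)).1 + (fderiv ℝ σ x (0, 1)).2 = 0)
    (ω : (ℝ × ℝ) → ℝ) (hω : ContDiff ℝ 1 ω)
    (hωper : ∀ (x : ℝ × ℝ) (m : ℤ × ℤ), ω (x + ((m.1 : ℝ), (m.2 : ℝ))) = ω x) :
    HasDerivAt
      (fun ε : ℝ =>
        -∑ j, fderiv ℝ g
            (fun j' => pairT2 (fun x => ω x + ε * fderiv ℝ ω x (σ x)) (φ j'))
            (Pi.single j 1) *
          pairT2 (fun x => ω x + ε * fderiv ℝ ω x (σ x))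
            (fun y => fderiv ℝ (φ j) y (σ y)))
      ((∑ j, fderiv ℝ g (fun j' => pairT2 ω (φ j')) (Pi.single j 1) *
          pairT2 ω (fun x => fderiv ℝ (fun y => fderiv ℝ (φ j) y (σ y)) x (σ x)))
        + ∑ j, ∑ l,
            fderiv ℝ (fun p => fderiv ℝ g p (Pi.single j 1))
              (fun j' => pairT2 ω (φ j')) (Pi.single l 1) *
            pairT2 ω (fun y => fderiv ℝ (φ j) y (σ y)) *
            pairT2 ω (fun y => fderiv ℝ (φ l) y (σ y)))
      0 := by
  classical
  -- notation
  set c : (ℝ × ℝ) → ℝ := fun x => fderiv ℝ ω x (σ x) with hc_def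
  have hc : Continuous c := (hω.continuous_fderiv one_ne_zero).clm_apply hσ.continuous
  have hω1 : Continuous ω := hω.continuous
  -- σ·∇φ j
  have hsdφ : ∀ j, ContDiff ℝ 1 (fun y => fderiv ℝ (φ j) y (σ y)) := fun j =>
    (((hφ j).fderiv_right (by norm_num)).clm_apply hσ)
  -- periodicity of derivatives
  have hφ1 : ∀ j, ContDiff ℝ 1 (φ j) := fun j => (hφ j).of_le one_le_two
  have hsdφper : ∀ (j : Fin n) (z : ℝ × ℝ) (m : ℤ × ℤ),
      (fun y => fderiv ℝ (φ j) y (σ y)) (z + ((m.1 : ℝ), (m.2 : ℝ)))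
        = (fun y => fderiv ℝ (φ j) y (σ y)) z := by
    intro j z m
    simp only
    rw [fderiv_shift ((hφ1 j).differentiable one_ne_zero) _ (fun x => hφper j x m) z,
      hσper z m]
  -- key pairing identities
  set P₀ : Fin n → ℝ := fun j' => pairT2 ω (φ j') with hP₀
  set Q : Fin n → ℝ := fun j' => pairT2 c (φ j') with hQdef
  set A : Fin n → ℝ := fun j => pairT2 ω (fun y => fderiv ℝ (φ j) y (σ y)) with hA
  set B : Fin n → ℝ := fun j => pairT2 c (fun y => fderiv ℝ (φ j) y (σ y)) with hB
  set C : Fin n → ℝ := fun j =>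
    pairT2 ω (fun x => fderiv ℝ (fun y => fderiv ℝ (φ j) y (σ y)) x (σ x)) with hC
  have hQA : ∀ l, Q l = -A l := by
    intro l
    exact pairT2_ibp hω (hφ1 l) hσ hσdiv hωper (hφper l) hσper
  have hBC : ∀ j, B j = -C j := by
    intro j
    exact pairT2_ibp hω (hsdφ j) hσ hσdiv hωper (hsdφper j) hσper
  -- rewrite the function
  have hφc : ∀ j, Continuous (φ j) := fun j => (hφ j).continuous
  have hsdφc : ∀ j, Continuous (fun y => fderiv ℝ (φ j) y (σ y)) := fun j =>
    (hsdφ j).continuous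
  have hEq : (fun ε : ℝ =>
        -∑ j, fderiv ℝ g
            (fun j' => pairT2 (fun x => ω x + ε * fderiv ℝ ω x (σ x)) (φ j'))
            (Pi.single j 1) *
          pairT2 (fun x => ω x + ε * fderiv ℝ ω x (σ x))
            (fun y => fderiv ℝ (φ j) y (σ y)))
      = (fun ε : ℝ =>
        -∑ j, fderiv ℝ g (fun j' => P₀ j' + ε * Q j') (Pi.single j 1)
          * (A j + ε * B j)) := by
    funext ε
    congr 1
    apply Finset.sum_congr rfl
    intro j _
    have hX : (fun j' => pairT2 (fun x => ω x + ε * fderiv ℝ ω x (σ x)) (φ j'))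
        = fun j' => P₀ j' + ε * Q j' := by
      funext j'
      exact pairT2_affine hω1 hc (hφc j') ε
    rw [hX]
    congr 1
    exact pairT2_affine hω1 hc (hsdφc j) ε
  rw [hEq]
  -- derivative of each factor
  have hγ : HasDerivAt (fun ε : ℝ => (fun j' => P₀ j' + ε * Q j')) Q 0 := by
    rw [hasDerivAt_pi]
    intro j'
    simpa using ((hasDerivAt_id (0:ℝ)).mul_const (Q j')).const_add (P₀ j')
  have hγ0 : (fun j' => P₀ j' + (0:ℝ) * Q j') = P₀ := by funext j'; simp
  have hGc : ∀ j : Fin n, ContDiff ℝ 1 (fun p => fderiv ℝ g p (Pi.single j 1)) := by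
    intro j
    exact (hg.fderiv_right (by norm_num)).clm_apply contDiff_const
  set D : Fin n → Fin n → ℝ := fun j l =>
    fderiv ℝ (fun p => fderiv ℝ g p (Pi.single j 1)) P₀ (Pi.single l (1:ℝ)) with hD
  have hGder : ∀ j : Fin n, HasDerivAt
      (fun ε : ℝ => fderiv ℝ g (fun j' => P₀ j' + ε * Q j') (Pi.single j 1))
      (∑ l, Q l * D j l) 0 := by
    intro j
    have hF : HasFDerivAt (fun p => fderiv ℝ g p (Pi.single j 1))
        (fderiv ℝ (fun p => fderiv ℝ g p (Pi.single j 1)) P₀)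
        ((fun j' => P₀ j' + (0:ℝ) * Q j')) := by
      rw [hγ0]
      exact ((hGc j).differentiable one_ne_zero P₀).hasFDerivAt
    have h := hF.comp_hasDerivAt 0 hγ
    have hval : fderiv ℝ (fun p => fderiv ℝ g p (Pi.single j 1)) P₀ Q
        = ∑ l, Q l * D j l := by
      conv_lhs => rw [pi_eq_sum_single Q]
      rw [map_sum]
      apply Finset.sum_congr rfl
      intro l _
      rw [(fderiv ℝ (fun p => fderiv ℝ g p (Pi.single j 1)) P₀).map_smul, smul_eq_mul]
    rw [hval] at h
    exact h
  have hlin : ∀ j : Fin n, HasDerivAt (fun ε : ℝ => A j + ε * B j) (B j) 0 := by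
    intro j
    simpa using ((hasDerivAt_id (0:ℝ)).mul_const (B j)).const_add (A j)
  have hprod : ∀ j : Fin n, HasDerivAt
      (fun ε : ℝ => fderiv ℝ g (fun j' => P₀ j' + ε * Q j') (Pi.single j 1)
        * (A j + ε * B j))
      ((∑ l, Q l * D j l) * (A j + 0 * B j)
        + fderiv ℝ g (fun j' => P₀ j' + (0:ℝ) * Q j') (Pi.single j 1) * B j) 0 :=
    fun j => (hGder j).mul (hlin j)
  have hsum := (HasDerivAt.fun_sum (fun j (_ : j ∈ Finset.univ) => hprod j)).fun_neg
  have hfinal :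
      -∑ j, ((∑ l, Q l * D j l) * (A j + 0 * B j)
        + fderiv ℝ g (fun j' => P₀ j' + (0:ℝ) * Q j') (Pi.single j 1) * B j)
      = (∑ j, fderiv ℝ g P₀ (Pi.single j 1) * C j) + ∑ j, ∑ l, D j l * A j * A l := by
    rw [← Finset.sum_add_distrib, ← Finset.sum_neg_distrib]
    apply Finset.sum_congr rfl
    intro j _
    rw [hγ0]
    have h1 : ∑ l, Q l * D j l = -(∑ l, D j l * A l) := by
      rw [← Finset.sum_neg_distrib]
      apply Finset.sum_congr rfl
      intro l _
      rw [hQA l]; ring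
    have h2 : ∑ l, D j l * A j * A l = (∑ l, D j l * A l) * A j := by
      rw [Finset.sum_mul]
      apply Finset.sum_congr rfl
      intro l _; ring
    rw [h1, hBC j, h2]
    ring
  rw [hfinal] at hsum
  exact hsum
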